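/- The scalar proximal operator g(y) (as defined with parameters q̄ > 0, δ̃ ≥ 0, μ > 0) equals the unique minimizer over q ∈ [−q̄, q̄] of the function f(q) = (1/(2α))q² + δ|q| + (1/(2μ))(q − v)², where y = (1/(1+μ/α))·v, δ̃ = δ/(1+μ/α), and α > 0; i.e., solving the one-dimensional regularized proximal problem yields the stated piecewise-linear formula. -/

import Mathlib

/-- The scalar proximal operator of the incremental Volt/VAR rule. -/
noncomputable def proxOp (qb dt mu : ℝ) (y : ℝ) : ℝ :=
  if y > qb + mu * dt then qb
  else if y > mu * dt then y - mu * dt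
  else if y ≥ -(mu * dt) then 0
  else if y ≥ -qb - mu * dt then y + mu * dt
  else -qb

lemma proxOp_key (qb dt mu y : ℝ) (hqb : 0 < qb) (hdt : 0 ≤ dt) (hmu : 0 < mu) :
    proxOp qb dt mu y ∈ Set.Icc (-qb) qb ∧
    ∀ q ∈ Set.Icc (-qb) qb,
      0 ≤ (proxOp qb dt mu y - y) * (q - proxOp qb dt mu y)
          + (mu * dt) * (|q| - |proxOp qb dt mu y|) := by
  have hD : 0 ≤ mu * dt := mul_nonneg hmu.le hdt
  unfold proxOp
  split_ifs with h1 h2 h3 h4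
  · refine ⟨⟨by linarith, le_refl qb⟩, ?_⟩
    rintro q ⟨hq1, hq2⟩
    rw [abs_of_pos hqb]
    have hqa : |q| ≤ qb := abs_le.mpr ⟨hq1, hq2⟩
    nlinarith [mul_nonneg (by linarith : (0:ℝ) ≤ qb - q) (by linarith : (0:ℝ) ≤ y - qb - mu * dt),
      mul_nonneg hD (sub_nonneg.2 (le_abs_self q))]
  · refine ⟨⟨by linarith, by linarith⟩, ?_⟩
    rintro q ⟨hq1, hq2⟩
    rw [abs_of_pos (by linarith : (0:ℝ) < y - mu * dt)]
    have := le_abs_self q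
    nlinarith
  · refine ⟨⟨by linarith, by linarith⟩, ?_⟩
    rintro q ⟨hq1, hq2⟩
    simp only [abs_zero, sub_zero]
    have h5 : -(mu*dt) ≤ y := h3
    have h6 : y ≤ mu * dt := by linarith [not_lt.mp h2]
    have := le_abs_self q
    have := neg_abs_le q
    nlinarith
  · refine ⟨⟨by linarith, by linarith⟩, ?_⟩
    rintro q ⟨hq1, hq2⟩
    have h5 : y < -(mu*dt) := not_le.mp h3
    rw [abs_of_neg (by linarith : y + mu*dt < 0)]
    have := neg_abs_le q
    nlinarith
  · refine ⟨⟨le_refl _, by linarith⟩, ?_⟩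
    rintro q ⟨hq1, hq2⟩
    rw [abs_neg, abs_of_pos hqb]
    have h5 : y < -qb - mu * dt := not_le.mp h4
    have hqa : |q| ≤ qb := abs_le.mpr ⟨hq1, hq2⟩
    nlinarith [mul_nonneg (by linarith : (0:ℝ) ≤ q + qb) (by linarith : (0:ℝ) ≤ -qb - mu*dt - y),
      mul_nonneg hD (by linarith [neg_abs_le q] : (0:ℝ) ≤ |q| + q)]

/-- The scalar proximal operator `g(y)` with `y = α̃ v`, `δ̃ = δ α̃`, `α̃ = 1/(1+μ/α)`, is
the unique minimizer over `[-q̄, q̄]` of `f(q) = q²/(2α) + δ|q| + (q-v)²/(2μ)`. -/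
theorem proxOp_is_unique_minimizer (α δ mu qb v : ℝ)
    (hα : 0 < α) (hδ : 0 ≤ δ) (hmu : 0 < mu) (hqb : 0 < qb) :
    proxOp qb (δ / (1 + mu / α)) mu ((1 / (1 + mu / α)) * v) ∈ Set.Icc (-qb) qb ∧
    IsMinOn (fun q : ℝ => q ^ 2 / (2 * α) + δ * |q| + (q - v) ^ 2 / (2 * mu))
      (Set.Icc (-qb) qb)
      (proxOp qb (δ / (1 + mu / α)) mu ((1 / (1 + mu / α)) * v)) ∧
    ∀ q ∈ Set.Icc (-qb) qb,
      IsMinOn (fun q : ℝ => q ^ 2 / (2 * α) + δ * |q| + (q - v) ^ 2 / (2 * mu))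
        (Set.Icc (-qb) qb) q →
      q = proxOp qb (δ / (1 + mu / α)) mu ((1 / (1 + mu / α)) * v) := by
  have hc : (0:ℝ) < 1 + mu / α := by positivity
  set dt : ℝ := δ / (1 + mu / α) with hdt_def
  set y : ℝ := (1 / (1 + mu / α)) * v with hy_def
  set g : ℝ := proxOp qb dt mu y with hg_def
  obtain ⟨hmem, hkey⟩ := proxOp_key qb dt mu y hqb (div_nonneg hδ hc.le) hmu
  have hδeq : δ = (1 + mu / α) * dt := by
    rw [hdt_def]; field_simp
  have hveq : v = (1 + mu / α) * y := by
    rw [hy_def]; field_simp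
  have hK : (0:ℝ) < 1 / (2 * α) + 1 / (2 * mu) := by positivity
  have hM : (0:ℝ) < 1 / mu + 1 / α := by positivity
  have main : ∀ q : ℝ,
      q ^ 2 / (2 * α) + δ * |q| + (q - v) ^ 2 / (2 * mu)
        - (g ^ 2 / (2 * α) + δ * |g| + (g - v) ^ 2 / (2 * mu))
      = (q - g) ^ 2 * (1 / (2 * α) + 1 / (2 * mu))
        + (1 / mu + 1 / α) * ((g - y) * (q - g) + (mu * dt) * (|q| - |g|)) := by
    intro q
    rw [hδeq, hveq]
    field_simp
    ring
  rw [← hg_def] at hmem hkey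
  clear_value g y dt
  clear hg_def hdt_def hy_def hδeq hveq hc
  refine ⟨hmem, ?_, ?_⟩
  · rw [isMinOn_iff]
    intro q hq
    have h1 := hkey q hq
    have h2 := main q

    nlinarith [mul_nonneg hM.le h1, mul_nonneg (sq_nonneg (q - g)) hK.le]
  · intro q hq hmin
    have h1 := hkey q hq
    have h2 := main q
    have h3 : q ^ 2 / (2 * α) + δ * |q| + (q - v) ^ 2 / (2 * mu)
        ≤ g ^ 2 / (2 * α) + δ * |g| + (g - v) ^ 2 / (2 * mu) :=
      isMinOn_iff.mp hmin g hmem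
    clear hmin hkey main hmem

    have h4 : (q - g) ^ 2 ≤ 0 := by nlinarith [mul_nonneg hM.le h1]
    have h5 : q - g = 0 := by nlinarith [sq_nonneg (q - g)]
    linarith
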